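/- For every ρ ∈ (0,1), every x > 0 and every y with 0 < y < ρx, defining α := α_{ρ,x,y} and β := α·x/y, one has P(S₁ > x, ρS₁ + √(1−ρ²)S₂ > y) = (1/(2π))·[2·I(1, x) − I(α, x) + I(β, y)]. -/

import Mathlib

open MeasureTheory Filter

noncomputable def alphaRho (ρ x y : ℝ) : ℝ :=
  Real.sqrt (1 + (y / x - ρ) ^ 2 / (1 - ρ ^ 2))

noncomputable def tailI (F : ℝ → ℝ) (a x : ℝ) : ℝ :=
  ∫ s in Set.Ioi a, (1 - F (x * s)) / (s * Real.sqrt (s ^ 2 - 1))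

open Set

namespace Stmt8Aux


lemma arccos_antitone : Antitone Real.arccos := fun _ _ h => by
  simp only [Real.arccos_eq_pi_div_two_sub_arcsin]
  exact sub_le_sub_left (Real.monotone_arcsin h) _

lemma sqrt_one_sub_inv_sq {s : ℝ} (hs : 1 < s) :
    Real.sqrt (1 - (s⁻¹) ^ 2) = Real.sqrt (s ^ 2 - 1) / s := by
  have hs0 : (0:ℝ) < s := by linarith
  rw [show Real.sqrt (s ^ 2 - 1) / s = Real.sqrt (s ^ 2 - 1) / Real.sqrt (s ^ 2) by
    rw [Real.sqrt_sq hs0.le], ← Real.sqrt_div' _ (by positivity)]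
  · congr 1
    field_simp

lemma hasDerivAt_arccosInv {s : ℝ} (hs : 1 < s) :
    HasDerivAt (fun t : ℝ => Real.arccos t⁻¹) (1 / (s * Real.sqrt (s ^ 2 - 1))) s := by
  have hs0 : (0:ℝ) < s := by linarith
  have h1 : HasDerivAt (fun t : ℝ => t⁻¹) (-(s ^ 2)⁻¹) s := by
    simpa using hasDerivAt_inv (ne_of_gt hs0)
  have hinv1 : s⁻¹ < 1 := by
    rw [inv_lt_one_iff₀]; right; exact hs
  have hinv0 : 0 < s⁻¹ := by positivity
  have h2 : HasDerivAt Real.arccos (-(1 / Real.sqrt (1 - (s⁻¹) ^ 2))) s⁻¹ :=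
    Real.hasDerivAt_arccos (by linarith) (ne_of_lt hinv1)
  have h3 := h2.comp s h1
  have hsq : (0:ℝ) < Real.sqrt (s ^ 2 - 1) := Real.sqrt_pos.2 (by nlinarith)
  refine h3.congr_deriv ?_
  rw [sqrt_one_sub_inv_sq hs]
  field_simp



noncomputable def w (s : ℝ) : ℝ := 1 / (s * Real.sqrt (s ^ 2 - 1))

lemma w_meas : Measurable w := by
  unfold w
  fun_prop

lemma w_nonneg {s : ℝ} (hs : 1 ≤ s) : 0 ≤ w s := by
  unfold w; positivity

lemma w_intervalIntegrable {a b : ℝ} (ha : 1 ≤ a) (hab : a ≤ b) :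
    IntervalIntegrable w volume a b := by
  have hg : IntervalIntegrable (fun s => (s - 1) ^ (-(1/2) : ℝ)) volume a b := by
    have := (intervalIntegral.intervalIntegrable_rpow' (a := a - 1) (b := b - 1)
      (r := -(1/2)) (by norm_num)).comp_sub_right 1
    simpa using this
  refine hg.mono_fun w_meas.aestronglyMeasurable ?_
  rw [Set.uIoc_of_le hab]
  filter_upwards [ae_restrict_mem measurableSet_Ioc] with s hs
  have hs1 : 1 < s := lt_of_le_of_lt ha hs.1
  have h1 : (0:ℝ) < s - 1 := by linarith
  have hrp : (s - 1) ^ (-(1/2) : ℝ) = (Real.sqrt (s-1))⁻¹ := by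
    rw [Real.rpow_neg h1.le, Real.sqrt_eq_rpow]
  have hsq : Real.sqrt (s ^ 2 - 1) = Real.sqrt (s - 1) * Real.sqrt (s + 1) := by
    rw [← Real.sqrt_mul h1.le]; ring_nf
  have h2 : (0:ℝ) < Real.sqrt (s - 1) := Real.sqrt_pos.2 h1
  have h3 : (1:ℝ) ≤ Real.sqrt (s + 1) := by
    have := Real.sqrt_le_sqrt (show (1:ℝ) ≤ s + 1 by linarith)
    simpa using this
  rw [Real.norm_eq_abs, Real.norm_eq_abs, abs_of_nonneg (w_nonneg hs1.le),
    abs_of_nonneg (by positivity), hrp]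
  unfold w
  rw [hsq, one_div]
  apply inv_anti₀ h2
  calc Real.sqrt (s-1) = 1 * (Real.sqrt (s-1) * 1) := by ring
    _ ≤ s * (Real.sqrt (s-1) * Real.sqrt (s+1)) := by
        apply mul_le_mul (by linarith) (by nlinarith) (by positivity) (by linarith)

lemma integral_w {a b : ℝ} (ha : 1 ≤ a) (hab : a ≤ b) :
    ∫ s in a..b, w s = Real.arccos b⁻¹ - Real.arccos a⁻¹ := by
  apply intervalIntegral.integral_eq_sub_of_hasDeriv_right_of_le hab
  · apply Real.continuous_arccos.comp_continuousOn
    apply ContinuousOn.inv₀ continuousOn_id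
    intro s hs
    have : (1:ℝ) ≤ s := le_trans ha hs.1
    positivity
  · intro s hs
    exact (hasDerivAt_arccosInv (lt_of_le_of_lt ha hs.1)).hasDerivWithinAt
  · exact w_intervalIntegrable ha hab

lemma lintegral_w {a c : ℝ} (ha : 1 ≤ a) (hac : a < c) :
    ∫⁻ s in Set.Ioo a c, ENNReal.ofReal (w s) =
      ENNReal.ofReal (Real.arccos c⁻¹ - Real.arccos a⁻¹) := by
  rw [← ofReal_integral_eq_lintegral_ofReal]
  · rw [← integral_Ioc_eq_integral_Ioo, ← intervalIntegral.integral_of_le hac.le,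
      integral_w ha hac.le]
  · exact (((w_intervalIntegrable ha hac.le).1).mono_set Set.Ioo_subset_Ioc_self)
  · filter_upwards [ae_restrict_mem measurableSet_Ioo] with s hs
    exact w_nonneg (le_trans ha hs.1.le)



noncomputable def J (a x r : ℝ) : ℝ :=
  if a * x < r then Real.arccos (x / r) - Real.arccos a⁻¹ else 0

noncomputable def L (ρ x y r : ℝ) : ℝ :=
  if x < r then
    min (2 * Real.arccos (x / r))
      (Real.arccos (x / r) + Real.arccos (y / r) - Real.arccos ρ)
  else 0

variable {ρ x y r : ℝ}

lemma alpha_sq (hρ0 : 0 < ρ) (hρ1 : ρ < 1) (hx : 0 < x) :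
    (alphaRho ρ x y * x) ^ 2 = x ^ 2 + (ρ * x - y) ^ 2 / (1 - ρ ^ 2) := by
  have h1 : (0:ℝ) < 1 - ρ ^ 2 := by nlinarith
  have harg : (0:ℝ) ≤ 1 + (y / x - ρ) ^ 2 / (1 - ρ ^ 2) := by positivity
  rw [mul_pow, alphaRho, Real.sq_sqrt harg]
  field_simp
  ring

lemma one_lt_alpha (hρ0 : 0 < ρ) (hρ1 : ρ < 1) (hx : 0 < x) (hy : 0 < y) (hyx : y < ρ * x) :
    1 < alphaRho ρ x y := by
  have h1 : (0:ℝ) < 1 - ρ ^ 2 := by nlinarith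
  have h2 : y / x - ρ ≠ 0 := by
    have : y / x < ρ := by rw [div_lt_iff₀ hx]; linarith [hyx]
    linarith
  have h3 : (0:ℝ) < (y / x - ρ) ^ 2 / (1 - ρ ^ 2) := by positivity
  rw [alphaRho, show (1:ℝ) = Real.sqrt 1 from Real.sqrt_one.symm]
  exact Real.sqrt_lt_sqrt (by norm_num) (by rw [Real.sqrt_one]; linarith)

lemma sqrt_aux (hx : 0 < x) (hr : x < r) :
    Real.sqrt (1 - (x / r) ^ 2) = Real.sqrt (r ^ 2 - x ^ 2) / r := by
  have hr0 : (0:ℝ) < r := lt_trans hx hr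
  rw [show Real.sqrt (r ^ 2 - x ^ 2) / r = Real.sqrt (r ^ 2 - x ^ 2) / Real.sqrt (r ^ 2) by
    rw [Real.sqrt_sq hr0.le], ← Real.sqrt_div' _ (by positivity)]
  congr 1
  field_simp

lemma cos_cx_add_phi (hρ0 : 0 < ρ) (hρ1 : ρ < 1) (hx : 0 < x) (hr : x < r) :
    Real.cos (Real.arccos (x / r) + Real.arccos ρ) =
      (ρ * x - Real.sqrt (r ^ 2 - x ^ 2) * Real.sqrt (1 - ρ ^ 2)) / r := by
  have hr0 : (0:ℝ) < r := lt_trans hx hr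
  have hxr1 : x / r ≤ 1 := by rw [div_le_one hr0]; linarith
  have hxr0 : 0 < x / r := by positivity
  rw [Real.cos_add, Real.cos_arccos (by linarith) hxr1, Real.cos_arccos (by linarith) hρ1.le,
    Real.sin_arccos, Real.sin_arccos, sqrt_aux hx hr]
  field_simp

/-- key inequality: r ≤ αx direction -/
lemma key_le (hρ0 : 0 < ρ) (hρ1 : ρ < 1) (hx : 0 < x) (hy : 0 < y) (hyx : y < ρ * x)
    (hr : x < r) (hra : r ≤ alphaRho ρ x y * x) :
    Real.arccos (x / r) + Real.arccos ρ ≤ Real.arccos (y / r) := by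
  have hr0 : (0:ℝ) < r := lt_trans hx hr
  have h1 : (0:ℝ) < 1 - ρ ^ 2 := by nlinarith
  have hyr1 : y / r ≤ 1 := by rw [div_le_one hr0]; nlinarith
  have hyr0 : 0 < y / r := by positivity
  -- membership
  have hmem1 : Real.arccos (x / r) + Real.arccos ρ ∈ Icc 0 Real.pi := by
    constructor
    · exact add_nonneg (Real.arccos_nonneg _) (Real.arccos_nonneg _)
    · have h2 := (Real.arccos_le_pi_div_two (x := x / r)).2 (div_pos hx hr0).le
      have h3 := (Real.arccos_le_pi_div_two (x := ρ)).2 hρ0.le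
      linarith
  have hmem2 : Real.arccos (y / r) ∈ Icc 0 Real.pi :=
    ⟨Real.arccos_nonneg _, Real.arccos_le_pi _⟩
  rw [← Real.strictAntiOn_cos.le_iff_ge hmem2 hmem1]
  rw [Real.cos_arccos (by linarith) hyr1, cos_cx_add_phi hρ0 hρ1 hx hr]
  rw [div_le_div_iff_of_pos_right hr0]
  -- now: y ≤ ρx - √(r²-x²)√(1-ρ²)
  have hsq : Real.sqrt (r ^ 2 - x ^ 2) * Real.sqrt (1 - ρ ^ 2) ≤ ρ * x - y := by
    have h4 : r ^ 2 ≤ (alphaRho ρ x y * x) ^ 2 := by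
      apply pow_le_pow_left₀ hr0.le hra
    rw [alpha_sq hρ0 hρ1 hx] at h4
    have h5 : (r ^ 2 - x ^ 2) * (1 - ρ ^ 2) ≤ (ρ * x - y) ^ 2 :=
      (le_div_iff₀ h1).1 (by linarith)
    calc Real.sqrt (r ^ 2 - x ^ 2) * Real.sqrt (1 - ρ ^ 2)
        = Real.sqrt ((r ^ 2 - x ^ 2) * (1 - ρ ^ 2)) := (Real.sqrt_mul (by nlinarith) _).symm
      _ ≤ Real.sqrt ((ρ * x - y) ^ 2) := Real.sqrt_le_sqrt h5
      _ = ρ * x - y := by rw [Real.sqrt_sq (by linarith)]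
  linarith

/-- key inequality: αx ≤ r direction -/
lemma key_ge (hρ0 : 0 < ρ) (hρ1 : ρ < 1) (hx : 0 < x) (hy : 0 < y) (hyx : y < ρ * x)
    (hr : x < r) (hra : alphaRho ρ x y * x ≤ r) :
    Real.arccos (y / r) ≤ Real.arccos (x / r) + Real.arccos ρ := by
  have hr0 : (0:ℝ) < r := lt_trans hx hr
  have h1 : (0:ℝ) < 1 - ρ ^ 2 := by nlinarith
  have hyr1 : y / r ≤ 1 := by rw [div_le_one hr0]; nlinarith
  have hyr0 : 0 < y / r := by positivity
  have hmem1 : Real.arccos (x / r) + Real.arccos ρ ∈ Icc 0 Real.pi := by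
    constructor
    · exact add_nonneg (Real.arccos_nonneg _) (Real.arccos_nonneg _)
    · have h2 := (Real.arccos_le_pi_div_two (x := x / r)).2 (div_pos hx hr0).le
      have h3 := (Real.arccos_le_pi_div_two (x := ρ)).2 hρ0.le
      linarith
  have hmem2 : Real.arccos (y / r) ∈ Icc 0 Real.pi :=
    ⟨Real.arccos_nonneg _, Real.arccos_le_pi _⟩
  rw [← Real.strictAntiOn_cos.le_iff_ge hmem1 hmem2]
  rw [Real.cos_arccos (by linarith) hyr1, cos_cx_add_phi hρ0 hρ1 hx hr]
  rw [div_le_div_iff_of_pos_right hr0]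
  have hxa : 0 < alphaRho ρ x y * x := by
    have := one_lt_alpha hρ0 hρ1 hx hy hyx
    positivity
  have hsq : ρ * x - y ≤ Real.sqrt (r ^ 2 - x ^ 2) * Real.sqrt (1 - ρ ^ 2) := by
    have h4 : (alphaRho ρ x y * x) ^ 2 ≤ r ^ 2 := by
      apply pow_le_pow_left₀ hxa.le hra
    rw [alpha_sq hρ0 hρ1 hx] at h4
    have h5 : (ρ * x - y) ^ 2 ≤ (r ^ 2 - x ^ 2) * (1 - ρ ^ 2) :=
      (div_le_iff₀ h1).1 (by linarith)
    calc ρ * x - y = Real.sqrt ((ρ * x - y) ^ 2) := by rw [Real.sqrt_sq (by linarith)]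
      _ ≤ Real.sqrt ((r ^ 2 - x ^ 2) * (1 - ρ ^ 2)) := Real.sqrt_le_sqrt h5
      _ = _ := Real.sqrt_mul (by nlinarith) _
  linarith


lemma phi_eq (hρ0 : 0 < ρ) (hρ1 : ρ < 1) (hx : 0 < x) (hy : 0 < y) (hyx : y < ρ * x) :
    Real.arccos ((alphaRho ρ x y * x / y)⁻¹) =
      Real.arccos ((alphaRho ρ x y)⁻¹) + Real.arccos ρ := by
  have hα := one_lt_alpha hρ0 hρ1 hx hy hyx
  have hxa : x < alphaRho ρ x y * x := by nlinarith
  have h1 : (alphaRho ρ x y * x / y)⁻¹ = y / (alphaRho ρ x y * x) := by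
    rw [inv_div]
  have h2 : (alphaRho ρ x y)⁻¹ = x / (alphaRho ρ x y * x) := by
    field_simp
  rw [h1, h2]
  exact le_antisymm
    (key_ge hρ0 hρ1 hx hy hyx hxa le_rfl)
    (key_le hρ0 hρ1 hx hy hyx hxa le_rfl)

lemma L_nonneg (hρ0 : 0 < ρ) (hρ1 : ρ < 1) (hx : 0 < x) (hy : 0 < y) (hyx : y < ρ * x)
    (r : ℝ) : 0 ≤ L ρ x y r := by
  unfold L
  split_ifs with h
  · have hr0 : (0:ℝ) < r := lt_trans hx h
    have hyr : y / r < ρ := by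
      rw [div_lt_iff₀ hr0]; nlinarith
    have h2 : Real.arccos ρ ≤ Real.arccos (y / r) := arccos_antitone hyr.le
    have h3 := Real.arccos_nonneg (x / r)
    have h4 := Real.arccos_nonneg (y / r)
    exact le_min (by linarith) (by linarith)
  · exact le_refl _

lemma J_nonneg {a : ℝ} (ha : 1 ≤ a) (hx : 0 < x) (r : ℝ) : 0 ≤ J a x r := by
  unfold J
  split_ifs with h
  · have ha0 : (0:ℝ) < a := by linarith
    have hr0 : (0:ℝ) < r := lt_of_le_of_lt (by positivity) h
    have hle : x / r ≤ a⁻¹ := by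
      rw [inv_eq_one_div, div_le_div_iff₀ hr0 ha0]
      nlinarith
    have := arccos_antitone hle
    linarith
  · exact le_refl _

lemma L_eq_J (hρ0 : 0 < ρ) (hρ1 : ρ < 1) (hx : 0 < x) (hy : 0 < y) (hyx : y < ρ * x)
    (hr : 0 < r) :
    L ρ x y r = 2 * J 1 x r - J (alphaRho ρ x y) x r + J (alphaRho ρ x y * x / y) y r := by
  have hα := one_lt_alpha hρ0 hρ1 hx hy hyx
  have hβy : alphaRho ρ x y * x / y * y = alphaRho ρ x y * x := by
    field_simp
  have hxa : x < alphaRho ρ x y * x := by nlinarith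
  unfold L J
  rw [hβy]
  rcases le_or_gt r x with h1 | h1
  · rw [if_neg (by linarith), if_neg (by simpa using not_lt.2 h1), if_neg (by push_neg; linarith),
      if_neg (by push_neg; linarith)]
    ring
  · rw [if_pos h1, if_pos (by simpa using h1)]
    rcases le_or_gt r (alphaRho ρ x y * x) with h2 | h2
    · rw [if_neg (not_lt.2 h2), if_neg (not_lt.2 h2)]
      have hkey := key_le hρ0 hρ1 hx hy hyx h1 h2
      rw [min_eq_left (by linarith), inv_one, Real.arccos_one]
      ring
    · rw [if_pos h2, if_pos h2]
      have hkey := key_ge hρ0 hρ1 hx hy hyx h1 h2.le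
      have hphi := phi_eq hρ0 hρ1 hx hy hyx
      rw [min_eq_right (by linarith), hphi, inv_one, Real.arccos_one]
      ring




variable {ρ x y r : ℝ}


lemma lt_cos_iff {t θ : ℝ} (ht0 : -1 ≤ t) (ht1 : t < 1) (hθ : |θ| ≤ Real.pi) :
    t < Real.cos θ ↔ |θ| < Real.arccos t := by
  rw [← Real.cos_abs]
  constructor
  · intro h
    have e1 : Real.arccos (Real.cos |θ|) = |θ| := Real.arccos_cos (abs_nonneg _) hθ
    have e2 := Real.strictAntiOn_arccos ⟨ht0, ht1.le⟩
      ⟨by linarith [Real.neg_one_le_cos |θ|], Real.cos_le_one _⟩ h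
    rwa [e1] at e2
  · intro h
    have e2 := Real.strictAntiOn_cos ⟨abs_nonneg θ, le_trans h.le (Real.arccos_le_pi t)⟩
      ⟨Real.arccos_nonneg t, Real.arccos_le_pi t⟩ h
    rwa [Real.cos_arccos ht0 ht1.le] at e2

lemma section_eq (hρ0 : 0 < ρ) (hρ1 : ρ < 1) (hx : 0 < x) (hy : 0 < y)
    (hyx : y < ρ * x) (hr : x < r) :
    {θ : ℝ | x < r * Real.cos θ ∧
        y < ρ * (r * Real.cos θ) + Real.sqrt (1 - ρ ^ 2) * (r * Real.sin θ)} ∩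
      Ioo (-Real.pi) Real.pi =
    Ioo (max (-Real.arccos (x / r)) (Real.arccos ρ - Real.arccos (y / r)))
      (Real.arccos (x / r)) := by
  have hr0 : (0:ℝ) < r := lt_trans hx hr
  have hπ := Real.pi_pos
  set cx := Real.arccos (x / r) with hcx
  set cy := Real.arccos (y / r) with hcy
  set φ := Real.arccos ρ with hφ
  have hxr1 : x / r < 1 := by rw [div_lt_one hr0]; exact hr
  have hxr0 : 0 < x / r := div_pos hx hr0
  have hyx' : y < x := by nlinarith
  have hyr1 : y / r < 1 := by rw [div_lt_one hr0]; linarith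
  have hyr0 : 0 < y / r := div_pos hy hr0
  have hcx2 : cx ≤ Real.pi / 2 := Real.arccos_le_pi_div_two.2 hxr0.le
  have hcx0 : 0 < cx := Real.arccos_pos.2 hxr1
  have hcy2 : cy ≤ Real.pi / 2 := Real.arccos_le_pi_div_two.2 hyr0.le
  have hcy0 : 0 < cy := Real.arccos_pos.2 hyr1
  have hφ2 : φ < Real.pi / 2 := Real.arccos_lt_pi_div_two.2 hρ0
  have hφ0 : 0 < φ := Real.arccos_pos.2 hρ1
  have hcxcy : cx < cy := by
    apply Real.strictAntiOn_arccos ⟨by linarith, hyr1.le⟩ ⟨by linarith, hxr1.le⟩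
    rw [div_lt_div_iff_of_pos_right hr0]
    exact hyx'
  have hcos2 : ∀ θ : ℝ, ρ * (r * Real.cos θ) + Real.sqrt (1 - ρ ^ 2) * (r * Real.sin θ)
      = r * Real.cos (θ - φ) := by
    intro θ
    rw [Real.cos_sub, hφ, Real.cos_arccos (by linarith) hρ1.le, Real.sin_arccos]
    ring
  ext θ
  simp only [Set.mem_inter_iff, Set.mem_setOf_eq, Set.mem_Ioo, max_lt_iff]
  constructor
  · rintro ⟨⟨h1, h2⟩, hθ1, hθ2⟩
    have hc1 : x / r < Real.cos θ := by rwa [div_lt_iff₀ hr0, mul_comm]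
    have habs : |θ| < cx :=
      (lt_cos_iff (by linarith) hxr1 (abs_lt.2 ⟨hθ1, hθ2⟩).le).1 hc1
    rw [abs_lt] at habs
    refine ⟨⟨habs.1, ?_⟩, habs.2⟩
    -- second condition gives θ > φ - cy
    rw [hcos2 θ] at h2
    have hc2 : y / r < Real.cos (θ - φ) := by rwa [div_lt_iff₀ hr0, mul_comm]
    have habs2 : |θ - φ| < cy := by
      refine (lt_cos_iff (by linarith) hyr1 ?_).1 hc2
      rw [abs_le]
      constructor <;> [linarith [habs.1]; linarith [habs.2]]
    rw [abs_lt] at habs2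
    linarith [habs2.1]
  · rintro ⟨⟨hl1, hl2⟩, hu⟩
    have habs : |θ| < cx := abs_lt.2 ⟨hl1, hu⟩
    have hθπ : |θ| ≤ Real.pi := by rw [abs_lt] at habs; rw [abs_le]; constructor <;> linarith
    have hc1 : x / r < Real.cos θ := (lt_cos_iff (by linarith) hxr1 hθπ).2 habs
    have habs2 : |θ - φ| < cy := by
      rw [abs_lt] at habs ⊢
      exact ⟨by linarith [hl2], by linarith [habs.2]⟩
    have hc2 : y / r < Real.cos (θ - φ) := by
      refine (lt_cos_iff (by linarith) hyr1 ?_).2 habs2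
      rw [abs_le]; rw [abs_lt] at habs2; constructor <;> linarith
    refine ⟨⟨by rwa [div_lt_iff₀ hr0, mul_comm] at hc1, ?_⟩, ?_, ?_⟩
    · rw [hcos2 θ]; rwa [div_lt_iff₀ hr0, mul_comm] at hc2
    · rw [abs_lt] at habs; linarith [habs.1]
    · rw [abs_lt] at habs; linarith [habs.2]

lemma section_volume (hρ0 : 0 < ρ) (hρ1 : ρ < 1) (hx : 0 < x) (hy : 0 < y)
    (hyx : y < ρ * x) (hr : 0 < r) :
    volume ({θ : ℝ | x < r * Real.cos θ ∧
        y < ρ * (r * Real.cos θ) + Real.sqrt (1 - ρ ^ 2) * (r * Real.sin θ)} ∩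
      Ioo (-Real.pi) Real.pi) = ENNReal.ofReal (L ρ x y r) := by
  rcases le_or_gt r x with h1 | h1
  · have he : {θ : ℝ | x < r * Real.cos θ ∧
        y < ρ * (r * Real.cos θ) + Real.sqrt (1 - ρ ^ 2) * (r * Real.sin θ)} ∩
      Ioo (-Real.pi) Real.pi = ∅ := by
      rw [Set.eq_empty_iff_forall_notMem]
      rintro θ ⟨⟨hθ1, _⟩, _⟩
      have : r * Real.cos θ ≤ r := mul_le_of_le_one_right hr.le (Real.cos_le_one θ)
      linarith
    rw [he, L, if_neg (not_lt.2 h1)]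
    simp
  · rw [section_eq hρ0 hρ1 hx hy hyx h1, Real.volume_Ioo, L, if_pos h1]
    congr 1
    rcases le_total (-Real.arccos (x / r)) (Real.arccos ρ - Real.arccos (y / r)) with h | h
    · rw [max_eq_right h, min_eq_right (by linarith)]
      ring
    · rw [max_eq_left h, min_eq_left (by linarith)]
      ring









lemma J_meas {a x : ℝ} : Measurable (J a x) := by
  unfold J
  exact Measurable.ite (measurableSet_lt measurable_const measurable_id)
    ((Real.continuous_arccos.measurable.comp (measurable_const.div measurable_id)).sub
      measurable_const) measurable_const

lemma tailI_eq (ν : Measure ℝ) [IsProbabilityMeasure ν] (F : ℝ → ℝ)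
    (hF : ∀ t, F t = (ν (Iic t)).toReal) {a x : ℝ} (ha : 1 ≤ a) (hx : 0 < x) :
    tailI F a x = ∫ r, J a x r ∂ν := by
  have hFmono : Monotone F := by
    intro s t hst
    rw [hF, hF]
    exact ENNReal.toReal_mono (measure_ne_top _ _) (measure_mono (Iic_subset_Iic.2 hst))
  have hF01 : ∀ t, 0 ≤ F t ∧ F t ≤ 1 := by
    intro t
    rw [hF]
    refine ⟨ENNReal.toReal_nonneg, ?_⟩
    have h : ν (Iic t) ≤ 1 := prob_le_one
    simpa using ENNReal.toReal_mono ENNReal.one_ne_top h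
  have hFtail : ∀ t, ENNReal.ofReal (1 - F t) = ν (Ioi t) := by
    intro t
    have h1 := prob_add_prob_compl (μ := ν) (measurableSet_Iic (a := t))
    rw [compl_Iic] at h1
    have h2 : (ν (Iic t)).toReal + (ν (Ioi t)).toReal = 1 := by
      rw [← ENNReal.toReal_add (measure_ne_top _ _) (measure_ne_top _ _), h1]
      simp
    rw [hF]
    rw [show 1 - (ν (Iic t)).toReal = (ν (Ioi t)).toReal by linarith]
    exact ENNReal.ofReal_toReal (measure_ne_top _ _)
  -- step 1: Bochner to lintegral
  have hwmeas : Measurable fun s => (1 - F (x * s)) / (s * Real.sqrt (s ^ 2 - 1)) := by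
    apply Measurable.div
    · exact (measurable_const.sub (hFmono.measurable.comp (measurable_const.mul measurable_id)))
    · fun_prop
  rw [tailI, integral_eq_lintegral_of_nonneg_ae ?_ hwmeas.aestronglyMeasurable]
  rotate_left
  · rw [EventuallyLE, ae_restrict_iff' measurableSet_Ioi]
    filter_upwards with s hs
    have hs1 : (1:ℝ) < s := lt_of_le_of_lt ha hs
    have := (hF01 (x * s)).2
    have hd : (0:ℝ) < s * Real.sqrt (s ^ 2 - 1) := by
      have : (0:ℝ) < Real.sqrt (s ^ 2 - 1) := Real.sqrt_pos.2 (by nlinarith)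
      positivity
    simp only [Pi.zero_apply]
    exact div_nonneg (by linarith [(hF01 (x*s)).2]) hd.le
  -- step 2: rewrite integrand
  have hstep2 : ∫⁻ s in Ioi a, ENNReal.ofReal ((1 - F (x * s)) / (s * Real.sqrt (s ^ 2 - 1)))
      = ∫⁻ s in Ioi a, ν (Ioi (x * s)) * ENNReal.ofReal (w s) := by
    apply setLIntegral_congr_fun measurableSet_Ioi
    intro s hs
    beta_reduce
    have hs1 : (1:ℝ) < s := lt_of_le_of_lt ha hs
    rw [div_eq_mul_inv, ENNReal.ofReal_mul (by linarith [(hF01 (x*s)).2, (hF01 (x*s)).1])]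
    · rw [hFtail (x * s)]
      congr 1
      rw [w, one_div]
  rw [hstep2]
  -- step 3: express as double integral and swap
  have k_eq : ∀ s, ν (Ioi (x * s)) * ENNReal.ofReal (w s)
      = ∫⁻ r, (Ioi (x * s)).indicator (fun _ => ENNReal.ofReal (w s)) r ∂ν := by
    intro s
    rw [lintegral_indicator_const measurableSet_Ioi]
    ring
  simp_rw [k_eq]
  rw [lintegral_lintegral_swap]
  rotate_left
  · have huncurry : (Function.uncurry fun s r =>
        (Ioi (x * s)).indicator (fun _ => ENNReal.ofReal (w s)) r)
        = fun p : ℝ × ℝ =>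
          Set.indicator {q : ℝ × ℝ | x * q.1 < q.2} (fun q => ENNReal.ofReal (w q.1)) p := by
      funext p
      simp [Function.uncurry, Set.indicator_apply, Set.mem_Ioi]
    rw [huncurry]
    exact (Measurable.indicator
      (ENNReal.measurable_ofReal.comp (w_meas.comp measurable_fst))
      (measurableSet_lt (measurable_const.mul measurable_fst) measurable_snd)).aemeasurable
  -- step 4: inner integral
  have hinner : ∀ r, (∫⁻ s in Ioi a, (Ioi (x * s)).indicator (fun _ => ENNReal.ofReal (w s)) r)
      = ENNReal.ofReal (J a x r) := by
    intro r
    have h1 : ∀ s, (Ioi (x * s)).indicator (fun _ => ENNReal.ofReal (w s)) r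
        = (Iio (r / x)).indicator (fun u => ENNReal.ofReal (w u)) s := by
      intro s
      by_cases h : x * s < r
      · rw [Set.indicator_of_mem (Set.mem_Ioi.2 h),
          Set.indicator_of_mem (Set.mem_Iio.2 (by rwa [lt_div_iff₀ hx, mul_comm]))]
      · rw [Set.indicator_of_notMem (fun hc => h (Set.mem_Ioi.1 hc)),
          Set.indicator_of_notMem (fun hc => h (by
            have := Set.mem_Iio.1 hc
            rw [lt_div_iff₀ hx, mul_comm] at this
            exact this))]
    simp_rw [h1]
    rw [lintegral_indicator measurableSet_Iio, Measure.restrict_restrict measurableSet_Iio,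
      Set.inter_comm, Set.Ioi_inter_Iio]
    rcases lt_or_ge a (r / x) with h2 | h2
    · rw [lintegral_w ha h2, J, if_pos ((lt_div_iff₀ hx).1 h2), inv_div]
    · rw [Set.Ioo_eq_empty (not_lt.2 h2), Measure.restrict_empty, lintegral_zero_measure,
        J, if_neg (fun hc => (not_lt.2 h2) ((lt_div_iff₀ hx).2 hc))]
      simp
  simp_rw [hinner]
  refine (integral_eq_lintegral_of_nonneg_ae ?_ J_meas.aestronglyMeasurable).symm
  filter_upwards with r
  simp only [Pi.zero_apply]
  unfold J
  split_ifs with h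
  · have ha0 : (0:ℝ) < a := by linarith
    have hr0 : (0:ℝ) < r := lt_of_le_of_lt (by positivity) h
    have hle : x / r ≤ a⁻¹ := by
      rw [inv_eq_one_div, div_le_div_iff₀ hr0 ha0]
      nlinarith
    have := arccos_antitone hle
    linarith
  · exact le_refl _


lemma L_meas {ρ x y : ℝ} : Measurable (L ρ x y) := by
  unfold L
  refine Measurable.ite (measurableSet_lt measurable_const measurable_id) ?_ measurable_const
  apply Measurable.min
  · exact measurable_const.mul
      (Real.continuous_arccos.measurable.comp (measurable_const.div measurable_id))
  · exact ((Real.continuous_arccos.measurable.comp (measurable_const.div measurable_id)).add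
      (Real.continuous_arccos.measurable.comp (measurable_const.div measurable_id))).sub
       measurable_const

lemma J_integrable (ν : Measure ℝ) [IsProbabilityMeasure ν] {a x : ℝ}
    (ha : 1 ≤ a) (hx : 0 < x) : Integrable (J a x) ν := by
  refine (integrable_const Real.pi).mono' J_meas.aestronglyMeasurable ?_
  filter_upwards with r
  rw [Real.norm_eq_abs, abs_of_nonneg (J_nonneg ha hx r)]
  unfold J
  split_ifs
  · linarith [Real.arccos_le_pi (x / r), Real.arccos_nonneg (a : ℝ)⁻¹]
  · linarith [Real.pi_pos]

end Stmt8Aux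

theorem stmt8
    {Ω : Type*} [MeasurableSpace Ω] (μ : Measure Ω) [IsProbabilityMeasure μ]
    (R Θ : Ω → ℝ) (hRmeas : Measurable R) (hΘmeas : Measurable Θ)
    (hIndep : ProbabilityTheory.IndepFun R Θ μ)
    (hΘlaw : Measure.map Θ μ =
      (ENNReal.ofReal (2 * Real.pi))⁻¹ • volume.restrict (Set.Ioo (-Real.pi) Real.pi))
    (F : ℝ → ℝ) (hFdist : ∀ t : ℝ, F t = (μ {ω | R ω ≤ t}).toReal)
    (hF0 : F 0 = 0) :
    ∀ ρ : ℝ, 0 < ρ → ρ < 1 → ∀ x > (0 : ℝ), ∀ y : ℝ, 0 < y → y < ρ * x →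
      (μ {ω | x < R ω * Real.cos (Θ ω) ∧
          y < ρ * (R ω * Real.cos (Θ ω)) +
            Real.sqrt (1 - ρ ^ 2) * (R ω * Real.sin (Θ ω))}).toReal =
        (1 / (2 * Real.pi)) *
          (2 * tailI F 1 x - tailI F (alphaRho ρ x y) x +
            tailI F (alphaRho ρ x y * x / y) y) := by
  intro ρ hρ0 hρ1 x hx y hy0 hyx
  have hπ := Real.pi_pos
  set ν := Measure.map R μ with hν
  haveI : IsProbabilityMeasure ν := Measure.isProbabilityMeasure_map hRmeas.aemeasurable
  haveI : IsProbabilityMeasure (Measure.map Θ μ) := Measure.isProbabilityMeasure_map hΘmeas.aemeasurable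
  have hF : ∀ t, F t = (ν (Set.Iic t)).toReal := by
    intro t
    rw [hFdist t, hν, Measure.map_apply hRmeas measurableSet_Iic]
    rfl
  have hae : ∀ᵐ r ∂ν, 0 < r := by
    have h1 : (ν (Set.Iic 0)).toReal = 0 := by rw [← hF 0, hF0]
    have h0 : ν (Set.Iic 0) = 0 := by
      rcases (ENNReal.toReal_eq_zero_iff _).1 h1 with h | h
      · exact h
      · exact absurd h (measure_ne_top _ _)
    rw [ae_iff]
    convert h0 using 2
    ext r
    simp [not_lt]
  have hα := Stmt8Aux.one_lt_alpha hρ0 hρ1 hx hy0 hyx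
  have hyx' : y < x := by nlinarith
  have hβ1 : 1 ≤ alphaRho ρ x y * x / y := by
    rw [le_div_iff₀ hy0]
    nlinarith
  set S : Set (ℝ × ℝ) := {p : ℝ × ℝ | x < p.1 * Real.cos p.2 ∧
      y < ρ * (p.1 * Real.cos p.2) + Real.sqrt (1 - ρ ^ 2) * (p.1 * Real.sin p.2)} with hS
  have hSmeas : MeasurableSet S := by
    have c1 : Measurable fun p : ℝ × ℝ => p.1 * Real.cos p.2 := by fun_prop
    have c2 : Measurable fun p : ℝ × ℝ =>
        ρ * (p.1 * Real.cos p.2) + Real.sqrt (1 - ρ ^ 2) * (p.1 * Real.sin p.2) := by fun_prop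
    rw [hS, Set.setOf_and]
    exact (measurableSet_lt measurable_const c1).inter (measurableSet_lt measurable_const c2)
  have hpre : {ω | x < R ω * Real.cos (Θ ω) ∧
      y < ρ * (R ω * Real.cos (Θ ω)) +
        Real.sqrt (1 - ρ ^ 2) * (R ω * Real.sin (Θ ω))} = (fun ω => (R ω, Θ ω)) ⁻¹' S := rfl
  rw [hpre, ← Measure.map_apply (hRmeas.prodMk hΘmeas) hSmeas,
    (ProbabilityTheory.indepFun_iff_map_prod_eq_prod_map_map hRmeas.aemeasurable
      hΘmeas.aemeasurable).1 hIndep,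
    Measure.prod_apply hSmeas]
  have hcongr : ∀ᵐ r ∂ν, Measure.map Θ μ (Prod.mk r ⁻¹' S)
      = (ENNReal.ofReal (2 * Real.pi))⁻¹ * ENNReal.ofReal (Stmt8Aux.L ρ x y r) := by
    filter_upwards [hae] with r hr
    rw [hΘlaw, Measure.smul_apply,
      Measure.restrict_apply (hSmeas.preimage measurable_prodMk_left), smul_eq_mul]
    congr 1
    have hsec : (Prod.mk r ⁻¹' S) = {θ : ℝ | x < r * Real.cos θ ∧
        y < ρ * (r * Real.cos θ) + Real.sqrt (1 - ρ ^ 2) * (r * Real.sin θ)} := rfl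
    rw [hsec, Stmt8Aux.section_volume hρ0 hρ1 hx hy0 hyx hr]
  rw [lintegral_congr_ae hcongr,
    lintegral_const_mul _ Stmt8Aux.L_meas.ennreal_ofReal,
    ENNReal.toReal_mul]
  have h2π : ((ENNReal.ofReal (2 * Real.pi))⁻¹).toReal = 1 / (2 * Real.pi) := by
    rw [ENNReal.toReal_inv, ENNReal.toReal_ofReal (by positivity), one_div]
  rw [h2π]
  have hLint : (∫⁻ r, ENNReal.ofReal (Stmt8Aux.L ρ x y r) ∂ν).toReal
      = ∫ r, Stmt8Aux.L ρ x y r ∂ν :=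
    (integral_eq_lintegral_of_nonneg_ae
      (Filter.Eventually.of_forall fun r => Stmt8Aux.L_nonneg hρ0 hρ1 hx hy0 hyx r)
      Stmt8Aux.L_meas.aestronglyMeasurable).symm
  rw [hLint]
  congr 1
  have hJ1 := Stmt8Aux.J_integrable ν le_rfl hx
  have hJα := Stmt8Aux.J_integrable ν hα.le hx (a := alphaRho ρ x y)
  have hJβ := Stmt8Aux.J_integrable ν hβ1 hy0 (a := alphaRho ρ x y * x / y)
  have hLJ : ∫ r, Stmt8Aux.L ρ x y r ∂ν
      = ∫ r, ((2 * Stmt8Aux.J 1 x r - Stmt8Aux.J (alphaRho ρ x y) x r)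
          + Stmt8Aux.J (alphaRho ρ x y * x / y) y r) ∂ν := by
    apply integral_congr_ae
    filter_upwards [hae] with r hr
    rw [Stmt8Aux.L_eq_J hρ0 hρ1 hx hy0 hyx hr]
  have e2 : ∫ r, ((2 * Stmt8Aux.J 1 x r - Stmt8Aux.J (alphaRho ρ x y) x r)
      + Stmt8Aux.J (alphaRho ρ x y * x / y) y r) ∂ν
      = 2 * ∫ r, Stmt8Aux.J 1 x r ∂ν - ∫ r, Stmt8Aux.J (alphaRho ρ x y) x r ∂ν
        + ∫ r, Stmt8Aux.J (alphaRho ρ x y * x / y) y r ∂ν := by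
    have hfg : Integrable (fun r => 2 * Stmt8Aux.J 1 x r
        - Stmt8Aux.J (alphaRho ρ x y) x r) ν := (hJ1.const_mul 2).sub hJα
    have h2J : Integrable (fun r => 2 * Stmt8Aux.J 1 x r) ν := hJ1.const_mul 2
    rw [integral_add hfg hJβ, integral_sub h2J hJα, integral_const_mul]
  rw [hLJ, e2, Stmt8Aux.tailI_eq ν F hF le_rfl hx, Stmt8Aux.tailI_eq ν F hF hα.le hx,
    Stmt8Aux.tailI_eq ν F hF hβ1 hy0]
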